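/- Let p/q be an even rational parameter with p ≥ 2 and core predecessor p̂/q̂, with ω̂ = p̂ + q̂ and tune τ̂. Then κ(p̂/q̂) = 0; equivalently, 3τ̂ < ω̂. -/

import Mathlib

/-- An *even rational parameter* is a fraction `p/q` with `p, q` coprime positive
integers, `p < q`, and `p*q` even. -/
def EvenParam (p q : ℕ) : Prop :=
  Nat.Coprime p q ∧ 0 < p ∧ p < q ∧ Even (p * q)

/-- `τ` is the *tune* of `p/q`: `0 < 2τ < p+q` and `2pτ ≡ ±1 (mod p+q)`. -/
def IsTune (p q τ : ℕ) : Prop :=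
  0 < 2 * τ ∧ 2 * τ < p + q ∧
    (((p : ℤ) + q) ∣ 2 * p * τ - 1 ∨ ((p : ℤ) + q) ∣ 2 * p * τ + 1)

/-- `p'/q'` is the *even predecessor* of `p/q`. -/
def IsEvenPred (p q p' q' : ℕ) : Prop :=
  Nat.Coprime p' q' ∧ p' < q' ∧ Even (p' * q') ∧
    ((p : ℤ) * q' - (q : ℤ) * p').natAbs = 1 ∧ p' + q' < p + q

/-- `κ` is the unique nonnegative integer with `κ/(2κ+1) ≤ τ/(p+q) < (κ+1)/(2κ+3)`. -/
def IsKappa (p q τ κ : ℕ) : Prop :=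
  κ * (p + q) ≤ (2 * κ + 1) * τ ∧ (2 * κ + 3) * τ < (κ + 1) * (p + q)

-- helper lemma
lemma tune_add_eq (a b τ w' : ℕ) (hodd : (a + b) % 2 = 1) (hw'odd : w' % 2 = 1)
    (hcop : Nat.Coprime a (a + b)) (hτ : IsTune a b τ) (hle : w' ≤ a + b)
    (hε : ((a : ℤ) + b) ∣ ((a : ℤ) * w' - 1) ∨ ((a : ℤ) + b) ∣ ((a : ℤ) * w' + 1)) :
    2 * τ + w' = a + b := by
  obtain ⟨hpos, hlt, hdvd⟩ := hτ
  have hcopZ : IsCoprime ((a : ℤ) + b) (a : ℤ) := by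
    rw [Int.isCoprime_iff_gcd_eq_one]
    have : ((a : ℤ) + b) = ((a + b : ℕ) : ℤ) := by push_cast; ring
    rw [this, Int.gcd_natCast_natCast]
    exact (Nat.coprime_comm.mp hcop)
  have hwpos : 0 < w' := by omega
  rcases hdvd with h1 | h1 <;> rcases hε with h2 | h2
  · -- Ω ∣ a*(2τ - w'), contradiction
    have hd : ((a : ℤ) + b) ∣ (a : ℤ) * (2 * τ - w') := by
      have := dvd_sub h1 h2; convert this using 1; rfl; ring
    have hd2 : ((a : ℤ) + b) ∣ (2 * (τ:ℤ) - w') := hcopZ.dvd_of_dvd_mul_left hd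
    have : (2 * (τ:ℤ) - w') = 0 := by
      refine Int.eq_zero_of_abs_lt_dvd hd2 ?_
      rw [abs_lt]; constructor <;> push_cast <;> omega
    have : 2 * τ = w' := by exact_mod_cast (by linarith : 2 * (τ:ℤ) = w')
    omega
  · have hd : ((a : ℤ) + b) ∣ (a : ℤ) * (2 * τ + w') := by
      have := dvd_add h1 h2; convert this using 1; rfl; ring
    have hd2 : ((a : ℤ) + b) ∣ (2 * (τ:ℤ) + w' - (a + b)) :=
      (dvd_sub (hcopZ.dvd_of_dvd_mul_left hd) dvd_rfl)
    have : (2 * (τ:ℤ) + w' - (a + b)) = 0 := by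
      refine Int.eq_zero_of_abs_lt_dvd hd2 ?_
      rw [abs_lt]; constructor <;> push_cast <;> omega
    have : 2 * (τ:ℤ) + w' = a + b := by linarith
    exact_mod_cast this
  · have hd : ((a : ℤ) + b) ∣ (a : ℤ) * (2 * τ + w') := by
      have := dvd_add h1 h2; convert this using 1; rfl; ring
    have hd2 : ((a : ℤ) + b) ∣ (2 * (τ:ℤ) + w' - (a + b)) :=
      (dvd_sub (hcopZ.dvd_of_dvd_mul_left hd) dvd_rfl)
    have : (2 * (τ:ℤ) + w' - (a + b)) = 0 := by
      refine Int.eq_zero_of_abs_lt_dvd hd2 ?_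
      rw [abs_lt]; constructor <;> push_cast <;> omega
    have : 2 * (τ:ℤ) + w' = a + b := by linarith
    exact_mod_cast this
  · have hd : ((a : ℤ) + b) ∣ (a : ℤ) * (2 * τ - w') := by
      have := dvd_sub h1 h2; convert this using 1; rfl; ring
    have hd2 : ((a : ℤ) + b) ∣ (2 * (τ:ℤ) - w') := hcopZ.dvd_of_dvd_mul_left hd
    have : (2 * (τ:ℤ) - w') = 0 := by
      refine Int.eq_zero_of_abs_lt_dvd hd2 ?_
      rw [abs_lt]; constructor <;> push_cast <;> omega
    have : 2 * τ = w' := by exact_mod_cast (by linarith : 2 * (τ:ℤ) = w')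
    omega

lemma odd_sum_of_coprime_even (a b : ℕ) (hc : Nat.Coprime a b) (he : Even (a * b)) :
    (a + b) % 2 = 1 := by
  have h1 : 2 ∣ a ∨ 2 ∣ b := by
    rcases Nat.even_mul.mp he with h | h
    · exact Or.inl h.two_dvd
    · exact Or.inr h.two_dvd
  have h2 : ¬(2 ∣ a ∧ 2 ∣ b) := by
    rintro ⟨ha, hb⟩
    have := Nat.dvd_gcd ha hb
    rw [hc] at this
    omega
  omega

set_option maxHeartbeats 1000000 in
/-- the core predecessor has κ = 0, equivalently 3τ̂ < ω̂. -/
theorem corePred_kappa_zero (p q τ κ p' q' phat qhat tauhat : ℕ)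
    (h : EvenParam p q) (hp2 : 2 ≤ p)
    (hτ : IsTune p q τ) (hκ : IsKappa p q τ κ)
    (hpred : IsEvenPred p q p' q')
    (hphat : phat + 2 * κ * p' = p) (hqhat : qhat + 2 * κ * q' = q)
    (htauhat : IsTune phat qhat tauhat) :
    IsKappa phat qhat tauhat 0 ∧ 3 * tauhat < phat + qhat := by
  obtain ⟨hcop, hp0, hpq, heven⟩ := h
  obtain ⟨hcop', hp'q', heven', hdet, hlt'⟩ := hpred
  have hodd : (p + q) % 2 = 1 := odd_sum_of_coprime_even p q hcop heven
  have hw'odd : (p' + q') % 2 = 1 := odd_sum_of_coprime_even p' q' hcop' heven'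
  -- determinant ±1
  have hdet' : (p : ℤ) * q' - (q : ℤ) * p' = 1 ∨ (p : ℤ) * q' - (q : ℤ) * p' = -1 := by
    rcases Int.natAbs_eq_iff.mp hdet with h' | h'
    · exact Or.inl (by exact_mod_cast h')
    · exact Or.inr (by exact_mod_cast h')
  -- hε for p,q
  have hε : ((p : ℤ) + q) ∣ ((p : ℤ) * (p' + q' : ℕ) - 1) ∨
      ((p : ℤ) + q) ∣ ((p : ℤ) * (p' + q' : ℕ) + 1) := by
    rcases hdet' with h' | h'
    · left; refine ⟨p', ?_⟩; push_cast; linarith [h']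
    · right; refine ⟨p', ?_⟩; push_cast; linarith [h']
  have hcopω : Nat.Coprime p (p + q) := by
    simpa using (Nat.coprime_add_self_right).mpr hcop
  have key1 : 2 * τ + (p' + q') = p + q :=
    tune_add_eq p q τ (p' + q') hodd hw'odd hcopω hτ (le_of_lt hlt') hε
  -- kappa inequalities
  have e1 : (2 * κ + 1) * (2 * τ + (p' + q')) = (2 * κ + 1) * (p + q) := by rw [key1]
  have e2 : (2 * κ + 3) * (2 * τ + (p' + q')) = (2 * κ + 3) * (p + q) := by rw [key1]
  have hA : (2 * κ + 1) * (p' + q') ≤ p + q := by nlinarith [hκ.1, e1]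
  have hB : p + q < (2 * κ + 3) * (p' + q') := by nlinarith [hκ.2, e2]
  have e3 : phat + qhat + 2 * (κ * (p' + q')) = p + q := by
    have h3 : κ * (p' + q') = κ * p' + κ * q' := Nat.mul_add κ p' q'
    linarith [hphat, hqhat, h3]
  have hw1 : p' + q' ≤ phat + qhat := by linarith [hA, e3]
  have hw3 : phat + qhat < 3 * (p' + q') := by linarith [hB, e3]
  -- parity of phat+qhat
  have hoddhat : (phat + qhat) % 2 = 1 := by
    obtain ⟨m, hm⟩ : ∃ m, phat + qhat + 2 * m = p + q := ⟨κ * (p' + q'), e3⟩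
    omega
  -- hat determinant
  have hdethat : (phat : ℤ) * q' - (qhat : ℤ) * p' = (p : ℤ) * q' - (q : ℤ) * p' := by
    have h1 : (phat : ℤ) = (p : ℤ) - 2 * κ * p' := by
      have := hphat; push_cast [← this]; ring
    have h2 : (qhat : ℤ) = (q : ℤ) - 2 * κ * q' := by
      have := hqhat; push_cast [← this]; ring
    rw [h1, h2]; ring
  -- hat coprimality
  have hcophat : Nat.Coprime phat qhat := by
    have g := Nat.gcd phat qhat
    have hd1 : ((Nat.gcd phat qhat : ℕ) : ℤ) ∣ (phat : ℤ) :=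
      Int.natCast_dvd_natCast.mpr (Nat.gcd_dvd_left _ _)
    have hd2 : ((Nat.gcd phat qhat : ℕ) : ℤ) ∣ (qhat : ℤ) :=
      Int.natCast_dvd_natCast.mpr (Nat.gcd_dvd_right _ _)
    have hd3 : ((Nat.gcd phat qhat : ℕ) : ℤ) ∣ ((phat : ℤ) * q' - (qhat : ℤ) * p') :=
      dvd_sub (hd1.mul_right _) (hd2.mul_right _)
    rw [hdethat] at hd3
    have hd4 : ((Nat.gcd phat qhat : ℕ) : ℤ) ∣ 1 := by
      rcases hdet' with h' | h' <;> rw [h'] at hd3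
      · exact hd3
      · exact dvd_neg.mp hd3
    have : Nat.gcd phat qhat ∣ 1 := by exact_mod_cast hd4
    exact Nat.dvd_one.mp this
  have hcopωhat : Nat.Coprime phat (phat + qhat) := by
    simpa using (Nat.coprime_add_self_right).mpr hcophat
  -- hε for hat
  have hεhat : ((phat : ℤ) + qhat) ∣ ((phat : ℤ) * (p' + q' : ℕ) - 1) ∨
      ((phat : ℤ) + qhat) ∣ ((phat : ℤ) * (p' + q' : ℕ) + 1) := by
    rcases hdet' with h' | h'
    · left; refine ⟨p', ?_⟩; rw [← hdethat] at h'; push_cast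
      push_cast at h'; linarith [h']
    · right; refine ⟨p', ?_⟩; rw [← hdethat] at h'; push_cast
      push_cast at h'; linarith [h']
  have key2 : 2 * tauhat + (p' + q') = phat + qhat :=
    tune_add_eq phat qhat tauhat (p' + q') hoddhat hw'odd hcopωhat htauhat hw1 hεhat
  have hmain : 3 * tauhat < phat + qhat := by omega
  exact ⟨⟨by omega, by omega⟩, hmain⟩
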